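/- Let A be a finite alphabet and k a positive integer. Then F_k = F_1^k = (P_1 ∪ S_1)^k, where F_1^k denotes the k-fold composition of the relation F_1 with itself. In particular F_1 = P_1 ∪ S_1. -/

import Mathlib

open scoped ENNReal

/-- Length of a longest common prefix of `w` and `w'`. -/
noncomputable def lcpLen {A : Type*} (w w' : List A) : ℕ :=
  sSup {n | ∃ p : List A, p.length = n ∧ p <+: w ∧ p <+: w'}

/-- The prefix distance `d_P(w,w') = |w| + |w'| - 2|w ∧ w'|`. -/
noncomputable def dP {A : Type*} (w w' : List A) : ℕ :=
  w.length + w'.length - 2 * lcpLen w w'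

/-- Length of a longest common suffix of `w` and `w'`. -/
noncomputable def lcsLen {A : Type*} (w w' : List A) : ℕ :=
  sSup {n | ∃ s : List A, s.length = n ∧ s <:+ w ∧ s <:+ w'}

/-- The suffix distance `d_S(w,w') = |w| + |w'| - 2|s|`. -/
noncomputable def dS {A : Type*} (w w' : List A) : ℕ :=
  w.length + w'.length - 2 * lcsLen w w'

/-- Length of a longest common factor of `w` and `w'`. -/
noncomputable def lcfLen {A : Type*} (w w' : List A) : ℕ :=
  sSup {n | ∃ f : List A, f.length = n ∧ f <:+: w ∧ f <:+: w'}

/-- The factor distance `d_F(w,w') = |w| + |w'| - 2|f|`,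
`f` a maximum-length common factor. -/
noncomputable def dF {A : Type*} (w w' : List A) : ℕ :=
  w.length + w'.length - 2 * lcfLen w w'

/-- `n`-fold composition of a binary relation. -/
def relPow {α : Type*} (r : α → α → Prop) : ℕ → α → α → Prop
  | 0 => Eq
  | n + 1 => Relation.Comp (relPow r n) r

/-- `X` is a (variable-length) code: every word of `X*` factorizes uniquely over `X`. -/
def IsCode {A : Type*} (X : Set (List A)) : Prop :=
  ∀ l m : List (List A), (∀ x ∈ l, x ∈ X) → (∀ x ∈ m, x ∈ X) →
    l.flatten = m.flatten → l = m

/-- `X` is complete: every word is a factor of some word of `X*`. -/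
def IsCompleteSet {A : Type*} (X : Set (List A)) : Prop :=
  ∀ w : List A, ∃ l : List (List A), (∀ x ∈ l, x ∈ X) ∧ w <:+: l.flatten

/-- `X ⊆ A*` is a regular language: accepted by a finite deterministic automaton. -/
def IsRegularLang {A : Type*} (X : Set (List A)) : Prop :=
  ∃ (Q : Type) (_ : Fintype Q) (M : DFA A Q), M.accepts = X

/-- The uniform Bernoulli measure `μ(X) = Σ_{x ∈ X} |A|^{-|x|}`. -/
noncomputable def mu (A : Type*) [Fintype A] (X : Set (List A)) : ℝ≥0∞ :=
  ∑' x : X, ((Fintype.card A : ℝ≥0∞))⁻¹ ^ (x : List A).length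

section Aux
open List
variable {A : Type*}

lemma lcf_bdd (w w' : List A) :
    BddAbove {n | ∃ f : List A, f.length = n ∧ f <:+: w ∧ f <:+: w'} :=
  ⟨w.length, fun n hn => by obtain ⟨f, hf, h1, _⟩ := hn; exact hf ▸ h1.length_le⟩

lemma lcf_spec (w w' : List A) :
    ∃ f : List A, f.length = lcfLen w w' ∧ f <:+: w ∧ f <:+: w' := by
  have h0 : (0:ℕ) ∈ {n | ∃ f : List A, f.length = n ∧ f <:+: w ∧ f <:+: w'} :=
    ⟨[], rfl, nil_infix, nil_infix⟩
  exact Nat.sSup_mem ⟨0, h0⟩ (lcf_bdd w w')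

lemma le_lcf {w w' f : List A} (h1 : f <:+: w) (h2 : f <:+: w') :
    f.length ≤ lcfLen w w' :=
  le_csSup (lcf_bdd w w') ⟨f, rfl, h1, h2⟩

lemma lcp_bdd (w w' : List A) :
    BddAbove {n | ∃ p : List A, p.length = n ∧ p <+: w ∧ p <+: w'} :=
  ⟨w.length, fun n hn => by obtain ⟨f, hf, h1, _⟩ := hn; exact hf ▸ h1.length_le⟩

lemma lcp_spec (w w' : List A) :
    ∃ p : List A, p.length = lcpLen w w' ∧ p <+: w ∧ p <+: w' := by
  have h0 : (0:ℕ) ∈ {n | ∃ p : List A, p.length = n ∧ p <+: w ∧ p <+: w'} :=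
    ⟨[], rfl, nil_prefix, nil_prefix⟩
  exact Nat.sSup_mem ⟨0, h0⟩ (lcp_bdd w w')

lemma le_lcp {w w' p : List A} (h1 : p <+: w) (h2 : p <+: w') :
    p.length ≤ lcpLen w w' :=
  le_csSup (lcp_bdd w w') ⟨p, rfl, h1, h2⟩

lemma lcs_bdd (w w' : List A) :
    BddAbove {n | ∃ s : List A, s.length = n ∧ s <:+ w ∧ s <:+ w'} :=
  ⟨w.length, fun n hn => by obtain ⟨f, hf, h1, _⟩ := hn; exact hf ▸ h1.length_le⟩

lemma lcs_spec (w w' : List A) :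
    ∃ s : List A, s.length = lcsLen w w' ∧ s <:+ w ∧ s <:+ w' := by
  have h0 : (0:ℕ) ∈ {n | ∃ s : List A, s.length = n ∧ s <:+ w ∧ s <:+ w'} :=
    ⟨[], rfl, nil_suffix, nil_suffix⟩
  exact Nat.sSup_mem ⟨0, h0⟩ (lcs_bdd w w')

lemma le_lcs {w w' s : List A} (h1 : s <:+ w) (h2 : s <:+ w') :
    s.length ≤ lcsLen w w' :=
  le_csSup (lcs_bdd w w') ⟨s, rfl, h1, h2⟩

lemma dF_self (w : List A) : dF w w = 0 := by
  have h1 := le_lcf (infix_refl w) (infix_refl w)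
  unfold dF; omega

/-- One-letter edit step at an end. -/
def Step (v w : List A) : Prop :=
  v = w ∨ (∃ a, w = v ++ [a]) ∨ (∃ a, w = a :: v) ∨
    (∃ a, v = w ++ [a]) ∨ (∃ a, v = a :: w)

lemma step_dF {v w : List A} (h : Step v w) : dF v w ≤ 1 := by
  unfold dF
  rcases h with rfl | ⟨a, rfl⟩ | ⟨a, rfl⟩ | ⟨a, rfl⟩ | ⟨a, rfl⟩
  · have := le_lcf (infix_refl v) (infix_refl v); omega
  · have := le_lcf (infix_refl v) (v.prefix_append [a]).isInfix
    simp only [length_append, length_cons, length_nil]; omega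
  · have := le_lcf (infix_refl v) (v.suffix_cons a).isInfix
    simp only [length_cons]; omega
  · have := le_lcf (w.prefix_append [a]).isInfix (infix_refl w)
    simp only [length_append, length_cons, length_nil]; omega
  · have := le_lcf (w.suffix_cons a).isInfix (infix_refl w)
    simp only [length_cons]; omega

lemma dF_step {v w : List A} (h : dF v w ≤ 1) : Step v w := by
  obtain ⟨f, hf, h1, h2⟩ := lcf_spec v w
  have b1 : f.length ≤ v.length := h1.length_le
  have b2 : f.length ≤ w.length := h2.length_le
  have hsum : v.length + w.length ≤ 1 + 2 * f.length := by unfold dF at h; omega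
  have hcases : (v.length = f.length ∧ w.length = f.length) ∨
      (v.length = f.length ∧ w.length = f.length + 1) ∨
      (v.length = f.length + 1 ∧ w.length = f.length) := by omega
  rcases hcases with ⟨e1, e2⟩ | ⟨e1, e2⟩ | ⟨e1, e2⟩
  · left
    rw [← h1.eq_of_length e1.symm, ← h2.eq_of_length e2.symm]
  · have hfv : f = v := h1.eq_of_length e1.symm
    subst hfv
    obtain ⟨u, t, hut⟩ := h2
    have hl : u.length + t.length = 1 := by
      have := congrArg length hut; simp only [length_append] at this; omega
    rcases u with _ | ⟨b, u'⟩
    · obtain ⟨a, rfl⟩ : ∃ a, t = [a] := length_eq_one_iff.mp (by simpa using hl)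
      right; left; exact ⟨a, by simpa using hut.symm⟩
    · have hu' : u' = [] := by
        simp only [length_cons] at hl
        exact length_eq_zero_iff.mp (by omega)
      have ht : t = [] := by
        simp only [length_cons] at hl
        exact length_eq_zero_iff.mp (by omega)
      subst hu'; subst ht
      right; right; left; exact ⟨b, by simpa using hut.symm⟩
  · have hfw : f = w := h2.eq_of_length e2.symm
    subst hfw
    obtain ⟨u, t, hut⟩ := h1
    have hl : u.length + t.length = 1 := by
      have := congrArg length hut; simp only [length_append] at this; omega
    rcases u with _ | ⟨b, u'⟩
    · obtain ⟨a, rfl⟩ : ∃ a, t = [a] := length_eq_one_iff.mp (by simpa using hl)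
      right; right; right; left; exact ⟨a, by simpa using hut.symm⟩
    · have hu' : u' = [] := by
        simp only [length_cons] at hl
        exact length_eq_zero_iff.mp (by omega)
      have ht : t = [] := by
        simp only [length_cons] at hl
        exact length_eq_zero_iff.mp (by omega)
      subst hu'; subst ht
      right; right; right; right; exact ⟨b, by simpa using hut.symm⟩

lemma infix_tail_of_infix_cons {f y : List A} {a : A} (h : f <:+: a :: y) :
    f.tail <:+: y := by
  rcases infix_cons_iff.mp h with hp | hi
  · rcases prefix_cons_iff.mp hp with rfl | ⟨t, rfl, ht⟩
    · exact nil_infix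
    · exact ht.isInfix
  · exact ((tail_suffix f).isInfix).trans hi

lemma infix_dropLast_of_infix_concat {f y : List A} {a : A} (h : f <:+: y ++ [a]) :
    f.dropLast <:+: y := by
  rcases infix_concat_iff.mp h with hs | hi
  · rcases suffix_concat_iff.mp hs with rfl | ⟨t, rfl, ht⟩
    · exact nil_infix
    · rw [dropLast_concat]; exact ht.isInfix
  · exact ((dropLast_prefix f).isInfix).trans hi

lemma dF_triangle_step {w v w'' : List A} {n : ℕ} (h1 : dF w v ≤ n)
    (h2 : Step v w'') : dF w w'' ≤ n + 1 := by
  obtain ⟨f, hf, hfw, hfv⟩ := lcf_spec w v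
  have bw := hfw.length_le
  have bv := hfv.length_le
  unfold dF at h1 ⊢
  rcases h2 with rfl | ⟨a, rfl⟩ | ⟨a, rfl⟩ | ⟨a, rfl⟩ | ⟨a, rfl⟩
  · omega
  · have hl := le_lcf hfw (hfv.trans (v.prefix_append [a]).isInfix)
    simp only [length_append, length_cons, length_nil]; omega
  · have hl := le_lcf hfw (hfv.trans (v.suffix_cons a).isInfix)
    simp only [length_cons]; omega
  · have hl := le_lcf (((dropLast_prefix f).isInfix).trans hfw)
      (infix_dropLast_of_infix_concat hfv)
    simp only [length_dropLast] at hl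
    simp only [length_append, length_cons, length_nil] at h1 bv
    omega
  · have hl := le_lcf (((tail_suffix f).isInfix).trans hfw)
      (infix_tail_of_infix_cons hfv)
    simp only [length_tail] at hl
    simp only [length_cons] at h1 bv
    omega

lemma dF_peel {w w' : List A} {d : ℕ} (h : dF w w' = d + 1) :
    ∃ v, dF w v ≤ d ∧ dF v w' ≤ 1 := by
  obtain ⟨f, hf, h1, h2⟩ := lcf_spec w w'
  have bw : f.length ≤ w.length := h1.length_le
  have bw' : f.length ≤ w'.length := h2.length_le
  have E : w.length + w'.length = d + 1 + 2 * f.length := by unfold dF at h; omega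
  rcases Nat.lt_or_ge f.length w'.length with hlt | hge
  · -- remove a letter from w'
    obtain ⟨u, t, hut⟩ := h2
    have hlen : u.length + f.length + t.length = w'.length := by
      have := congrArg length hut; simp only [length_append] at this; omega
    rcases u with _ | ⟨b, u'⟩
    · rcases t.eq_nil_or_concat with rfl | ⟨t', b, rfl⟩
      · simp only [length_nil] at hlen; omega
      · refine ⟨f ++ t', ?_, ?_⟩
        · have hl := le_lcf h1 (f.prefix_append t').isInfix
          unfold dF
          simp only [concat_eq_append, length_append, length_cons, length_nil] at hlen ⊢
          omega
        · apply step_dF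
          right; left
          refine ⟨b, ?_⟩
          rw [← hut]; simp
    · refine ⟨u' ++ f ++ t, ?_, ?_⟩
      · have hl := le_lcf h1 ⟨u', t, rfl⟩
        unfold dF
        simp only [length_append, length_cons] at hlen ⊢
        omega
      · apply step_dF
        right; right; left
        refine ⟨b, ?_⟩
        rw [← hut]; simp
  · -- w' = f, shrink from w instead: grow f inside w by one letter
    have hfw' : f = w' := h2.eq_of_length (by omega)
    obtain ⟨u, t, hut⟩ := h1
    have hlen : u.length + f.length + t.length = w.length := by
      have := congrArg length hut; simp only [length_append] at this; omega
    rcases t with _ | ⟨b, t''⟩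
    · -- t = [], so u ≠ []
      rcases u.eq_nil_or_concat with rfl | ⟨u'', b, rfl⟩
      · simp only [length_nil] at hlen; omega
      · refine ⟨b :: f, ?_, ?_⟩
        · have hinf : b :: f <:+: w := ⟨u'', [], by rw [← hut]; simp⟩
          have hl := le_lcf hinf (infix_refl _)
          unfold dF
          simp only [length_cons, length_append, length_nil] at hl hlen ⊢
          omega
        · apply step_dF
          right; right; right; right
          exact ⟨b, by rw [hfw']⟩
    · refine ⟨f ++ [b], ?_, ?_⟩
      · have hinf : f ++ [b] <:+: w := ⟨u, t'', by rw [← hut]; simp⟩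
        have hl := le_lcf hinf (infix_refl _)
        unfold dF
        simp only [length_append, length_cons, length_nil] at hl hlen ⊢
        omega
      · apply step_dF
        right; right; right; left
        exact ⟨b, by rw [hfw']⟩

lemma dF_zero_eq {w w' : List A} (h : dF w w' = 0) : w = w' := by
  obtain ⟨f, hf, h1, h2⟩ := lcf_spec w w'
  have b1 := h1.length_le
  have b2 := h2.length_le
  have E : w.length + w'.length = 2 * f.length := by unfold dF at h; omega
  rw [← h1.eq_of_length (by omega), ← h2.eq_of_length (by omega)]

lemma dF_chain : ∀ (k : ℕ) (w w' : List A), dF w w' ≤ k →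
    relPow (fun a b : List A => dF a b ≤ 1) k w w'
  | 0, w, w', h => dF_zero_eq (by omega)
  | k+1, w, w', h => by
    by_cases h' : dF w w' ≤ k
    · exact ⟨w', dF_chain k w w' h', by simp [dF_self]⟩
    · obtain ⟨v, hv1, hv2⟩ := dF_peel (w := w) (w' := w') (d := k) (by omega)
      exact ⟨v, dF_chain k w v hv1, hv2⟩

lemma dF_of_relPow : ∀ (k : ℕ) (w w' : List A),
    relPow (fun a b : List A => dF a b ≤ 1) k w w' → dF w w' ≤ k
  | 0, w, w', h => by cases h; simp [dF_self]
  | k+1, w, w', ⟨v, hv1, hv2⟩ =>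
    dF_triangle_step (dF_of_relPow k w v hv1) (dF_step hv2)

lemma relPow_congr {α : Type*} {r s : α → α → Prop} (h : ∀ a b, r a b ↔ s a b) :
    ∀ (k : ℕ) (a b : α), relPow r k a b ↔ relPow s k a b
  | 0, a, b => Iff.rfl
  | k+1, a, b => by
    constructor
    · rintro ⟨v, h1, h2⟩
      exact ⟨v, (relPow_congr h k a v).mp h1, (h v b).mp h2⟩
    · rintro ⟨v, h1, h2⟩
      exact ⟨v, (relPow_congr h k a v).mpr h1, (h v b).mpr h2⟩

lemma dF_iff_dP_dS {w w' : List A} : dF w w' ≤ 1 ↔ (dP w w' ≤ 1 ∨ dS w w' ≤ 1) := by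
  constructor
  · intro h
    rcases dF_step h with rfl | ⟨a, rfl⟩ | ⟨a, rfl⟩ | ⟨a, rfl⟩ | ⟨a, rfl⟩
    · left
      have := le_lcp (prefix_refl w) (prefix_refl w)
      unfold dP; omega
    · left
      have := le_lcp (prefix_refl w) (w.prefix_append [a])
      unfold dP; simp only [length_append, length_cons, length_nil]; omega
    · right
      have := le_lcs (suffix_refl w) (w.suffix_cons a)
      unfold dS; simp only [length_cons]; omega
    · left
      have := le_lcp (w'.prefix_append [a]) (prefix_refl w')
      unfold dP; simp only [length_append, length_cons, length_nil]; omega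
    · right
      have := le_lcs (w'.suffix_cons a) (suffix_refl w')
      unfold dS; simp only [length_cons]; omega
  · rintro (h | h)
    · obtain ⟨p, hp, h1, h2⟩ := lcp_spec w w'
      have := le_lcf h1.isInfix h2.isInfix
      unfold dP at h; unfold dF; omega
    · obtain ⟨s, hs, h1, h2⟩ := lcs_spec w w'
      have := le_lcf h1.isInfix h2.isInfix
      unfold dS at h; unfold dF; omega

end Aux

/-- `F_k = F_1^k = (P_1 ∪ S_1)^k`; in particular `F_1 = P_1 ∪ S_1`. -/
theorem stmt_6 {A : Type*} [Fintype A] (hA : 2 ≤ Fintype.card A)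
    (k : ℕ) (hk : 1 ≤ k) :
    (∀ w w' : List A, dF w w' ≤ k ↔ relPow (fun a b : List A => dF a b ≤ 1) k w w') ∧
    (∀ w w' : List A,
      dF w w' ≤ k ↔ relPow (fun a b : List A => dP a b ≤ 1 ∨ dS a b ≤ 1) k w w') ∧
    (∀ w w' : List A, dF w w' ≤ 1 ↔ (dP w w' ≤ 1 ∨ dS w w' ≤ 1)) := by
  refine ⟨fun w w' => ⟨dF_chain k w w', dF_of_relPow k w w'⟩, fun w w' => ?_,
    fun w w' => dF_iff_dP_dS⟩
  rw [← relPow_congr (fun a b => dF_iff_dP_dS) k w w']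
  exact ⟨dF_chain k w w', dF_of_relPow k w w'⟩
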